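/- Let L be a lattice in F × F that is stable under O_F × O_F (i.e. (O_F × O_F)·L ⊆ L). Then the homothety classes adjacent to [L] having a representative stable under O_F × O_F are exactly the two distinct classes [(π,1)·L] and [(1,π)·L]. -/

import Mathlib

/-!
`F` is a nonarchimedean local field: a field complete with respect to a discrete valuation
(encoded by `Valued F ℤᵐ⁰` together with `CompleteSpace F` and the requirement that the
valuation ring is a discrete valuation ring) with finite residue field. We consider lattices
in the split quadratic algebra `F × F`.
-/

open scoped Multiplicative Pointwise WithZero

noncomputable section

variable (F : Type*) [Field F] [Valued F ℤᵐ⁰] [CompleteSpace F]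

/-- The valuation ring `O_F` of `F`. -/
noncomputable abbrev OF : ValuationSubring F := (Valued.v : Valuation F ℤᵐ⁰).valuationSubring

noncomputable instance : Algebra (OF F) (F × F) :=
  ((algebraMap F (F × F)).comp (algebraMap (OF F) F)).toAlgebra

/-- A lattice in `F × F`: a finitely generated `O_F`-submodule of `F × F` containing an
`F`-basis of `F × F` (equivalently, spanning `F × F` as an `F`-vector space). -/
def IsLattice (L : Submodule (OF F) (F × F)) : Prop :=
  L.FG ∧ Submodule.span F (L : Set (F × F)) = ⊤

/-- `L` is stable under `O_F × O_F` (componentwise multiplication). -/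
def Stable (L : Submodule (OF F) (F × F)) : Prop :=
  ∀ a b : OF F, ∀ x ∈ L, (((a : F), (b : F)) : F × F) * x ∈ L

/-- Two `O_F`-submodules of `F × F` are homothetic if they differ by (diagonal) scaling by an
element of `F^*`. -/
def Homothetic (L L' : Submodule (OF F) (F × F)) : Prop :=
  ∃ c : F, c ≠ 0 ∧ (L' : Set (F × F)) = c • (L : Set (F × F))

/-- The homothety classes of two lattices `L`, `L'` are adjacent (as vertices of the
Bruhat–Tits tree) if they are distinct and admit representatives `M`, `M'` with
`π·M ⊊ M' ⊊ M`. -/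
def Adjacent (π : OF F) (L L' : Submodule (OF F) (F × F)) : Prop :=
  ¬ Homothetic F L L' ∧
    ∃ M M' : Submodule (OF F) (F × F), Homothetic F L M ∧ Homothetic F L' M' ∧
      ((π : F)) • (M : Set (F × F)) ⊂ (M' : Set (F × F)) ∧
      (M' : Set (F × F)) ⊂ (M : Set (F × F))

section AuxLemmas

set_option linter.unusedSectionVars false

variable {F}

lemma mem_span_single {u x : F} : x ∈ Submodule.span (OF F) {u} ↔ ∃ a : OF F, (a:F) * u = x := by
  rw [Submodule.mem_span_singleton]; rfl

lemma smul_span_single (c u : F) :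
    c • ((Submodule.span (OF F) {u} : Submodule (OF F) F) : Set F)
      = ((Submodule.span (OF F) {c * u} : Submodule (OF F) F) : Set F) := by
  ext z
  simp only [Set.mem_smul_set, SetLike.mem_coe, mem_span_single, smul_eq_mul]
  constructor
  · rintro ⟨w, ⟨a, rfl⟩, rfl⟩
    exact ⟨a, by ring⟩
  · rintro ⟨a, rfl⟩
    exact ⟨(a:F) * u, ⟨a, rfl⟩, by ring⟩

lemma smul_prod_set (c : F) (A B : Set F) :
    c • (A ×ˢ B) = (c • A) ×ˢ (c • B) := by
  ext ⟨x, y⟩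
  constructor
  · rintro ⟨⟨a, b⟩, ⟨ha, hb⟩, h⟩
    exact ⟨⟨a, ha, congrArg Prod.fst h⟩, ⟨b, hb, congrArg Prod.snd h⟩⟩
  · rintro ⟨⟨a, ha, hx⟩, ⟨b, hb, hy⟩⟩
    exact ⟨(a, b), ⟨ha, hb⟩, Prod.ext hx hy⟩

lemma pair_smul_prod_set (c d : F) (A B : Set F) :
    (((c, d) : F × F)) • (A ×ˢ B) = (c • A) ×ˢ (d • B) := by
  ext ⟨x, y⟩
  constructor
  · rintro ⟨⟨a, b⟩, ⟨ha, hb⟩, h⟩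
    exact ⟨⟨a, ha, congrArg Prod.fst h⟩, ⟨b, hb, congrArg Prod.snd h⟩⟩
  · rintro ⟨⟨a, ha, hx⟩, ⟨b, hb, hy⟩⟩
    exact ⟨(a, b), ⟨ha, hb⟩, Prod.ext hx hy⟩

lemma span_pair_eq (x y : F) : ∃ z : F,
    Submodule.span (OF F) {x} ⊔ Submodule.span (OF F) {y} = Submodule.span (OF F) {z} := by
  rcases eq_or_ne y 0 with rfl | hy
  · exact ⟨x, by simp⟩
  rcases (OF F).mem_or_inv_mem (x / y) with h | h
  · refine ⟨y, le_antisymm (sup_le ?_ le_rfl) le_sup_right⟩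
    rw [Submodule.span_singleton_le_iff_mem]
    exact mem_span_single.mpr ⟨⟨x / y, h⟩, by field_simp⟩
  · rcases eq_or_ne x 0 with rfl | hx
    · exact ⟨y, by simp⟩
    refine ⟨x, le_antisymm (sup_le le_rfl ?_) le_sup_left⟩
    rw [Submodule.span_singleton_le_iff_mem]
    refine mem_span_single.mpr ⟨⟨(x / y)⁻¹, h⟩, ?_⟩
    show (x / y)⁻¹ * x = y
    field_simp

lemma fg_principal (N : Submodule (OF F) F) (hN : N.FG) :
    ∃ u : F, N = Submodule.span (OF F) {u} := by
  rcases hN with ⟨S, rfl⟩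
  classical
  induction S using Finset.induction_on with
  | empty => exact ⟨0, by simp⟩
  | @insert a s _ ih =>
    rcases ih with ⟨u, hu⟩
    rcases span_pair_eq a u with ⟨z, hz⟩
    exact ⟨z, by rw [Finset.coe_insert, Submodule.span_insert, hu, hz]⟩

lemma span_single_eq_unit {x y : F} (hy : y ≠ 0)
    (h : Submodule.span (OF F) {x} = Submodule.span (OF F) {y}) :
    ∃ w : OF F, IsUnit w ∧ x = (w : F) * y := by
  have hx : x ∈ Submodule.span (OF F) {y} := h ▸ Submodule.mem_span_singleton_self x
  have hy' : y ∈ Submodule.span (OF F) {x} := h ▸ Submodule.mem_span_singleton_self y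
  rcases mem_span_single.mp hx with ⟨a, ha⟩
  rcases mem_span_single.mp hy' with ⟨b, hb⟩
  refine ⟨a, ?_, ha.symm⟩
  have h1 : ((a * b : OF F) : F) * y = ((1 : OF F) : F) * y := by
    push_cast
    rw [one_mul]
    calc (a : F) * (b : F) * y = (b:F) * ((a:F) * y) := by ring
    _ = (b:F) * x := by rw [ha]
    _ = y := hb
  exact IsUnit.of_mul_eq_one (a := a) b (Subtype.coe_injective (mul_right_cancel₀ hy h1))

lemma span_dichotomy (π : OF F) (hπ : Irreducible π) {u x : F} (hu : u ≠ 0)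
    (h1 : Submodule.span (OF F) {(π : F) * u} ≤ Submodule.span (OF F) {x})
    (h2 : Submodule.span (OF F) {x} ≤ Submodule.span (OF F) {u}) :
    Submodule.span (OF F) {x} = Submodule.span (OF F) {u} ∨
    Submodule.span (OF F) {x} = Submodule.span (OF F) {(π : F) * u} := by
  have hx : x ∈ Submodule.span (OF F) {u} := h2 (Submodule.mem_span_singleton_self x)
  have hπu : (π : F) * u ∈ Submodule.span (OF F) {x} := h1 (Submodule.mem_span_singleton_self _)
  rcases mem_span_single.mp hx with ⟨a, ha⟩
  rcases mem_span_single.mp hπu with ⟨b, hb⟩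
  have hba : π = b * a := by
    have h1' : ((b * a : OF F) : F) * u = ((π : OF F) : F) * u := by
      push_cast
      rw [mul_assoc, ha, hb]
    exact (Subtype.coe_injective (mul_right_cancel₀ hu h1')).symm
  rcases hπ.isUnit_or_isUnit hba with hb' | ha'
  · right
    rcases isUnit_iff_exists_inv.mp hb' with ⟨b', hbb'⟩
    apply le_antisymm _ h1
    rw [Submodule.span_singleton_le_iff_mem]
    refine mem_span_single.mpr ⟨b', ?_⟩
    have hc : (b : F) * (b' : F) = 1 := by exact_mod_cast congrArg (Subtype.val) hbb'
    calc (b' : F) * ((π:F) * u) = (b':F) * ((b:F) * x) := by rw [hb]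
    _ = x := by rw [← mul_assoc, mul_comm (b':F), hc, one_mul]
  · left
    apply le_antisymm h2
    rw [Submodule.span_singleton_le_iff_mem]
    rcases isUnit_iff_exists_inv.mp ha' with ⟨a', haa'⟩
    refine mem_span_single.mpr ⟨a', ?_⟩
    have hc : (a : F) * (a' : F) = 1 := by exact_mod_cast congrArg (Subtype.val) haa'
    calc (a' : F) * x = (a':F) * ((a:F) * u) := by rw [ha]
    _ = u := by rw [← mul_assoc, mul_comm (a':F), hc, one_mul]

lemma one_smul_set (s : Set (F × F)) : (1 : F) • s = s := by
  ext p
  simp [Set.mem_smul_set]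

lemma smul_smul_set (c d : F) (s : Set (F × F)) : c • d • s = (c * d) • s := by
  ext p
  simp only [Set.mem_smul_set]
  constructor
  · rintro ⟨q, ⟨r, hr, rfl⟩, rfl⟩
    exact ⟨r, hr, (smul_smul c d r).symm⟩
  · rintro ⟨r, hr, rfl⟩
    exact ⟨d • r, ⟨r, hr, rfl⟩, smul_smul c d r⟩

lemma homothetic_refl (L : Submodule (OF F) (F × F)) : Homothetic F L L :=
  ⟨1, one_ne_zero, (one_smul_set _).symm⟩

lemma spanF_top {x y : F} (hx : x ≠ 0) (hy : y ≠ 0) {s : Set (F × F)}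
    (h1 : ((x, 0) : F × F) ∈ s) (h2 : ((0, y) : F × F) ∈ s) :
    Submodule.span F s = ⊤ := by
  rw [eq_top_iff]
  rintro ⟨p, q⟩ -
  have hpq : ((p, q) : F × F) = (p / x) • ((x, 0) : F × F) + (q / y) • ((0, y) : F × F) := by
    have e1 : p / x * x + q / y * 0 = p := by field_simp; ring
    have e2 : p / x * 0 + q / y * y = q := by field_simp; ring
    exact Prod.ext e1.symm e2.symm
  rw [hpq]
  exact Submodule.add_mem _ (Submodule.smul_mem _ _ (Submodule.subset_span h1))
    (Submodule.smul_mem _ _ (Submodule.subset_span h2))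

lemma prod_span_pair (x y : F) :
    (Submodule.span (OF F) {x}).prod (Submodule.span (OF F) {y})
      = Submodule.span (OF F) {((x, 0) : F × F), (0, y)} := by
  apply le_antisymm
  · rintro ⟨p, q⟩ ⟨hp, hq⟩
    rcases mem_span_single.mp hp with ⟨a, rfl⟩
    rcases mem_span_single.mp hq with ⟨b, rfl⟩
    have : (((a:F) * x, (b:F) * y) : F × F) = a • ((x, 0) : F × F) + b • ((0, y) : F × F) := by
      apply Prod.ext
      · show (a:F) * x = (a:F) * x + (b:F) * 0; ring
      · show (b:F) * y = (a:F) * 0 + (b:F) * y; ring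
    rw [this]
    exact Submodule.add_mem _
      (Submodule.smul_mem _ _ (Submodule.subset_span (by simp)))
      (Submodule.smul_mem _ _ (Submodule.subset_span (by simp)))
  · rw [Submodule.span_le]
    rintro p (rfl | rfl)
    · exact Submodule.mem_prod.mpr ⟨Submodule.mem_span_singleton_self x, Submodule.zero_mem _⟩
    · exact Submodule.mem_prod.mpr ⟨Submodule.zero_mem _, Submodule.mem_span_singleton_self y⟩

lemma lattice_prod_span {x y : F} (hx : x ≠ 0) (hy : y ≠ 0) :
    IsLattice F ((Submodule.span (OF F) {x}).prod (Submodule.span (OF F) {y})) := by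
  constructor
  · rw [prod_span_pair]
    exact Submodule.fg_span (Set.toFinite _)
  · refine spanF_top hx hy ?_ ?_
    · exact Submodule.mem_prod.mpr ⟨Submodule.mem_span_singleton_self x, Submodule.zero_mem _⟩
    · exact Submodule.mem_prod.mpr ⟨Submodule.zero_mem _, Submodule.mem_span_singleton_self y⟩

lemma stable_prod (Iu Iv : Submodule (OF F) F) : Stable F (Iu.prod Iv) := by
  intro a b x hx
  rcases Submodule.mem_prod.mp hx with ⟨h1, h2⟩
  exact Submodule.mem_prod.mpr ⟨Iu.smul_mem a h1, Iv.smul_mem b h2⟩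

lemma prod_coe_subset {A B A' B' : Submodule (OF F) F}
    (h : (A : Set F) ×ˢ (B : Set F) ⊆ (A' : Set F) ×ˢ (B' : Set F)) : A ≤ A' ∧ B ≤ B' :=
  ⟨fun x hx => (h (Set.mk_mem_prod hx (B.zero_mem))).1,
   fun y hy => (h (Set.mk_mem_prod (A.zero_mem) hy)).2⟩

lemma prod_set_eq {A B A' B' : Submodule (OF F) F}
    (h : (A : Set F) ×ˢ (B : Set F) = (A' : Set F) ×ˢ (B' : Set F)) : A = A' ∧ B = B' := by
  obtain ⟨h1, h2⟩ := prod_coe_subset h.subset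
  obtain ⟨h3, h4⟩ := prod_coe_subset h.superset
  exact ⟨le_antisymm h1 h3, le_antisymm h2 h4⟩

def smulMapOF (c : F) : (F × F) →ₗ[OF F] (F × F) where
  toFun p := c • p
  map_add' p q := smul_add c p q
  map_smul' a p := by
    show c • (a • p) = a • (c • p)
    refine Prod.ext ?_ ?_
    · show c * ((a:F) * p.1) = (a:F) * (c * p.1); ring
    · show c * ((a:F) * p.2) = (a:F) * (c * p.2); ring

lemma lattice_of_homothetic {L' M : Submodule (OF F) (F × F)}
    (h : Homothetic F L' M) (hL' : IsLattice F L') : IsLattice F M := by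
  obtain ⟨c, hc, hs⟩ := h
  have hmap : M = L'.map (smulMapOF c) := by
    apply SetLike.ext'
    rw [hs]
    ext p
    simp only [Submodule.map_coe, Set.mem_image, Set.mem_smul_set, SetLike.mem_coe, smulMapOF,
      LinearMap.coe_mk, AddHom.coe_mk]
  constructor
  · rw [hmap]; exact hL'.1.map _
  · have h2 : Submodule.span F (M : Set (F × F))
        = Submodule.map (c • (LinearMap.id : (F × F) →ₗ[F] (F × F)))
            (Submodule.span F (L' : Set (F × F))) := by
      rw [Submodule.map_span, hs]
      refine congrArg _ ?_
      ext p
      constructor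
      · rintro ⟨q, hq, rfl⟩
        exact ⟨q, hq, rfl⟩
      · rintro ⟨q, hq, rfl⟩
        exact ⟨q, hq, rfl⟩
    rw [h2, hL'.2, Submodule.map_top, LinearMap.range_eq_top]
    intro p
    exact ⟨c⁻¹ • p, by simp [smul_smul, mul_inv_cancel₀ hc, inv_mul_cancel₀ hc]⟩

lemma stable_decomp (L : Submodule (OF F) (F × F)) (hL : IsLattice F L) (hstab : Stable F L) :
    ∃ u v : F, u ≠ 0 ∧ v ≠ 0 ∧
      L = (Submodule.span (OF F) {u}).prod (Submodule.span (OF F) {v}) := by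
  let pr1 : (F × F) →ₗ[OF F] F :=
    { toFun := Prod.fst, map_add' := fun _ _ => rfl, map_smul' := fun _ _ => rfl }
  let pr2 : (F × F) →ₗ[OF F] F :=
    { toFun := Prod.snd, map_add' := fun _ _ => rfl, map_smul' := fun _ _ => rfl }
  obtain ⟨u, hu⟩ := fg_principal (L.map pr1) (hL.1.map pr1)
  obtain ⟨v, hv⟩ := fg_principal (L.map pr2) (hL.1.map pr2)
  have hdec : L = (Submodule.span (OF F) {u}).prod (Submodule.span (OF F) {v}) := by
    apply le_antisymm
    · rintro ⟨x, y⟩ hxy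
      refine Submodule.mem_prod.mpr ⟨?_, ?_⟩
      · exact hu ▸ Submodule.mem_map.mpr ⟨(x, y), hxy, rfl⟩
      · exact hv ▸ Submodule.mem_map.mpr ⟨(x, y), hxy, rfl⟩
    · rintro ⟨x, y⟩ hxy
      obtain ⟨hx, hy⟩ := Submodule.mem_prod.mp hxy
      rw [← hu] at hx; rw [← hv] at hy
      obtain ⟨⟨x₁, y₁⟩, h1, rfl⟩ := Submodule.mem_map.mp hx
      obtain ⟨⟨x₂, y₂⟩, h2, rfl⟩ := Submodule.mem_map.mp hy
      have m1 : ((pr1 (x₁, y₁) : F), (0 : F)) ∈ L := by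
        have := hstab 1 0 _ h1
        simpa [pr1] using this
      have m2 : ((0 : F), (pr2 (x₂, y₂) : F)) ∈ L := by
        have := hstab 0 1 _ h2
        simpa [pr2] using this
      have := L.add_mem m1 m2
      simpa using this
  refine ⟨u, v, ?_, ?_, hdec⟩
  · rintro rfl
    have hK : Submodule.span F (L : Set (F × F)) ≤ LinearMap.ker (LinearMap.fst F F F) := by
      refine Submodule.span_le.mpr fun p hp => ?_
      have : p.1 ∈ Submodule.span (OF F) {(0 : F)} :=
        hu ▸ Submodule.mem_map.mpr ⟨p, hp, rfl⟩
      simpa using this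
    rw [hL.2] at hK
    have h1 : ((1 : F), (0 : F)) ∈ LinearMap.ker (LinearMap.fst F F F) := hK Submodule.mem_top
    simp at h1
  · rintro rfl
    have hK : Submodule.span F (L : Set (F × F)) ≤ LinearMap.ker (LinearMap.snd F F F) := by
      refine Submodule.span_le.mpr fun p hp => ?_
      have : p.2 ∈ Submodule.span (OF F) {(0 : F)} :=
        hv ▸ Submodule.mem_map.mpr ⟨p, hp, rfl⟩
      simpa using this
    rw [hL.2] at hK
    have h1 : ((0 : F), (1 : F)) ∈ LinearMap.ker (LinearMap.snd F F F) := hK Submodule.mem_top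
    simp at h1

lemma unit_rel_contradiction (π : OF F) (hπ : Irreducible π) {w₁ w₂ : OF F}
    (h1 : IsUnit w₁) (h2 : IsUnit w₂) (h : (π : F) * (w₂ : F) = (w₁ : F)) : False := by
  have he : π * w₂ = w₁ := Subtype.coe_injective (by push_cast; exact h)
  rcases isUnit_iff_exists_inv.mp h2 with ⟨w₂', hw⟩
  apply hπ.not_isUnit
  have hp : π = w₁ * w₂' := by
    rw [← he, mul_assoc, hw, mul_one]
  rw [hp]
  exact h1.mul (IsUnit.of_mul_eq_one _ (by rwa [mul_comm] at hw))

lemma unit_sq_contradiction (π : OF F) (hπ : Irreducible π) {w₁ w₂ : OF F}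
    (h1 : IsUnit w₁) (h2 : IsUnit w₂)
    (h : (π : F) * (π : F) * (w₁ : F) = (w₂ : F)) : False := by
  have he : π * π * w₁ = w₂ := Subtype.coe_injective (by push_cast; exact h)
  rcases isUnit_iff_exists_inv.mp h1 with ⟨w₁', hw⟩
  have hp : π * π = w₂ * w₁' := by
    rw [← he, mul_assoc, mul_assoc, hw, mul_one]
  have : IsUnit (π * π) := by
    rw [hp]
    exact h2.mul (IsUnit.of_mul_eq_one _ (by rwa [mul_comm] at hw))
  exact hπ.not_isUnit (isUnit_of_mul_isUnit_left this)

end AuxLemmas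

set_option maxHeartbeats 1000000

/-- Let `L` be a lattice in `F × F` stable under `O_F × O_F`. Then the
homothety classes adjacent to `[L]` having a representative stable under `O_F × O_F` are
exactly the two distinct classes `[(π,1)·L]` and `[(1,π)·L]`. -/
theorem adjacent_stable_classes_split_case
    [IsDiscreteValuationRing (OF F)] [Finite (IsLocalRing.ResidueField (OF F))]
    (π : OF F) (hπ : Irreducible π)
    (L : Submodule (OF F) (F × F)) (hL : IsLattice F L) (hstab : Stable F L) :
    ∃ L₁ L₂ : Submodule (OF F) (F × F),
      IsLattice F L₁ ∧ (L₁ : Set (F × F)) = ((((π : F), 1) : F × F)) • (L : Set (F × F)) ∧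
      IsLattice F L₂ ∧ (L₂ : Set (F × F)) = (((1, (π : F)) : F × F)) • (L : Set (F × F)) ∧
      Adjacent F π L L₁ ∧ Stable F L₁ ∧
      Adjacent F π L L₂ ∧ Stable F L₂ ∧
      ¬ Homothetic F L₁ L₂ ∧
      (∀ L' : Submodule (OF F) (F × F), IsLattice F L' → Adjacent F π L L' →
        (∃ M : Submodule (OF F) (F × F), Homothetic F L' M ∧ Stable F M) →
        (Homothetic F L' L₁ ∨ Homothetic F L' L₂)) := by
  classical
  obtain ⟨u, v, hu, hv, hdec⟩ := stable_decomp L hL hstab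
  have hπ0 : (π : F) ≠ 0 := by
    simpa [ZeroMemClass.coe_eq_zero] using hπ.ne_zero
  have coeL : (L : Set (F × F))
      = ((Submodule.span (OF F) {u} : Submodule (OF F) F) : Set F)
        ×ˢ ((Submodule.span (OF F) {v} : Submodule (OF F) F) : Set F) := by
    rw [hdec]; rfl
  set L₁ : Submodule (OF F) (F × F) :=
    (Submodule.span (OF F) {(π : F) * u}).prod (Submodule.span (OF F) {v}) with hL₁def
  set L₂ : Submodule (OF F) (F × F) :=
    (Submodule.span (OF F) {u}).prod (Submodule.span (OF F) {(π : F) * v}) with hL₂def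
  have coeL₁ : (L₁ : Set (F × F))
      = ((Submodule.span (OF F) {(π : F) * u} : Submodule (OF F) F) : Set F)
        ×ˢ ((Submodule.span (OF F) {v} : Submodule (OF F) F) : Set F) := rfl
  have coeL₂ : (L₂ : Set (F × F))
      = ((Submodule.span (OF F) {u} : Submodule (OF F) F) : Set F)
        ×ˢ ((Submodule.span (OF F) {(π : F) * v} : Submodule (OF F) F) : Set F) := rfl
  have hπL : (π : F) • (L : Set (F × F))
      = ((Submodule.span (OF F) {(π : F) * u} : Submodule (OF F) F) : Set F)
        ×ˢ ((Submodule.span (OF F) {(π : F) * v} : Submodule (OF F) F) : Set F) := by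
    rw [coeL, smul_prod_set, smul_span_single, smul_span_single]
  -- span inclusions π x ∈ span x
  have hple : ∀ x : F, Submodule.span (OF F) {(π : F) * x} ≤ Submodule.span (OF F) {x} := by
    intro x
    rw [Submodule.span_singleton_le_iff_mem]
    exact mem_span_single.mpr ⟨π, rfl⟩
  -- non-homothety of L and L₁
  have hnh₁ : ¬ Homothetic F L L₁ := by
    rintro ⟨c, hc, hcs⟩
    rw [coeL, smul_prod_set, smul_span_single, smul_span_single] at hcs
    obtain ⟨hA, hB⟩ := prod_set_eq (coeL₁.symm.trans hcs)
    obtain ⟨w₁, hw₁, e₁⟩ := span_single_eq_unit (mul_ne_zero hc hu) hA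
    obtain ⟨w₂, hw₂, e₂⟩ := span_single_eq_unit (mul_ne_zero hc hv) hB
    have r₁ : (π : F) = (w₁ : F) * c := mul_right_cancel₀ hu (by linear_combination e₁)
    have r₂ : (1 : F) = (w₂ : F) * c := mul_right_cancel₀ hv (by linear_combination e₂)
    exact unit_rel_contradiction π hπ hw₁ hw₂
      (by linear_combination (w₂ : F) * r₁ - (w₁ : F) * r₂)
  have hnh₂ : ¬ Homothetic F L L₂ := by
    rintro ⟨c, hc, hcs⟩
    rw [coeL, smul_prod_set, smul_span_single, smul_span_single] at hcs
    obtain ⟨hA, hB⟩ := prod_set_eq (coeL₂.symm.trans hcs)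
    obtain ⟨w₁, hw₁, e₁⟩ := span_single_eq_unit (mul_ne_zero hc hu) hA
    obtain ⟨w₂, hw₂, e₂⟩ := span_single_eq_unit (mul_ne_zero hc hv) hB
    have r₁ : (1 : F) = (w₁ : F) * c := mul_right_cancel₀ hu (by linear_combination e₁)
    have r₂ : (π : F) = (w₂ : F) * c := mul_right_cancel₀ hv (by linear_combination e₂)
    exact unit_rel_contradiction π hπ hw₂ hw₁
      (by linear_combination (w₁ : F) * r₂ - (w₂ : F) * r₁)
  have hnh₁₂ : ¬ Homothetic F L₁ L₂ := by
    rintro ⟨c, hc, hcs⟩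
    rw [coeL₁, smul_prod_set, smul_span_single, smul_span_single] at hcs
    obtain ⟨hA, hB⟩ := prod_set_eq (coeL₂.symm.trans hcs)
    obtain ⟨w₁, hw₁, e₁⟩ := span_single_eq_unit (mul_ne_zero hc (mul_ne_zero hπ0 hu)) hA
    obtain ⟨w₂, hw₂, e₂⟩ := span_single_eq_unit (mul_ne_zero hc hv) hB
    have r₁ : (1 : F) = (w₁ : F) * c * (π : F) := mul_right_cancel₀ hu (by linear_combination e₁)
    have r₂ : (π : F) = (w₂ : F) * c := mul_right_cancel₀ hv (by linear_combination e₂)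
    exact unit_sq_contradiction π hπ hw₁ hw₂
      (by linear_combination (w₁ : F) * (π : F) * r₂ - (w₂ : F) * r₁)
  -- strict inclusions
  have hss₁a : (π : F) • (L : Set (F × F)) ⊂ (L₁ : Set (F × F)) := by
    rw [hπL, coeL₁]
    refine (ssubset_iff_subset_ne).mpr ⟨Set.prod_mono subset_rfl (SetLike.coe_subset_coe.mpr (hple v)), ?_⟩
    intro heq
    obtain ⟨-, hB⟩ := prod_set_eq heq
    obtain ⟨w, hw, e⟩ := span_single_eq_unit hv hB
    have r : (π : F) = (w : F) := mul_right_cancel₀ hv (by linear_combination e)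
    exact unit_rel_contradiction π hπ hw isUnit_one (by push_cast; linear_combination r)
  have hss₁b : (L₁ : Set (F × F)) ⊂ (L : Set (F × F)) := by
    rw [coeL₁, coeL]
    refine (ssubset_iff_subset_ne).mpr ⟨Set.prod_mono (SetLike.coe_subset_coe.mpr (hple u)) subset_rfl, ?_⟩
    intro heq
    obtain ⟨hA, -⟩ := prod_set_eq heq
    obtain ⟨w, hw, e⟩ := span_single_eq_unit hu hA
    have r : (π : F) = (w : F) := mul_right_cancel₀ hu (by linear_combination e)
    exact unit_rel_contradiction π hπ hw isUnit_one (by push_cast; linear_combination r)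
  have hss₂a : (π : F) • (L : Set (F × F)) ⊂ (L₂ : Set (F × F)) := by
    rw [hπL, coeL₂]
    refine (ssubset_iff_subset_ne).mpr ⟨Set.prod_mono (SetLike.coe_subset_coe.mpr (hple u)) subset_rfl, ?_⟩
    intro heq
    obtain ⟨hA, -⟩ := prod_set_eq heq
    obtain ⟨w, hw, e⟩ := span_single_eq_unit hu hA
    have r : (π : F) = (w : F) := mul_right_cancel₀ hu (by linear_combination e)
    exact unit_rel_contradiction π hπ hw isUnit_one (by push_cast; linear_combination r)
  have hss₂b : (L₂ : Set (F × F)) ⊂ (L : Set (F × F)) := by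
    rw [coeL₂, coeL]
    refine (ssubset_iff_subset_ne).mpr ⟨Set.prod_mono subset_rfl (SetLike.coe_subset_coe.mpr (hple v)), ?_⟩
    intro heq
    obtain ⟨-, hB⟩ := prod_set_eq heq
    obtain ⟨w, hw, e⟩ := span_single_eq_unit hv hB
    have r : (π : F) = (w : F) := mul_right_cancel₀ hv (by linear_combination e)
    exact unit_rel_contradiction π hπ hw isUnit_one (by push_cast; linear_combination r)
  refine ⟨L₁, L₂, lattice_prod_span (mul_ne_zero hπ0 hu) hv, ?_,
    lattice_prod_span hu (mul_ne_zero hπ0 hv), ?_,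
    ⟨hnh₁, L, L₁, homothetic_refl L, homothetic_refl L₁, hss₁a, hss₁b⟩, stable_prod _ _,
    ⟨hnh₂, L, L₂, homothetic_refl L, homothetic_refl L₂, hss₂a, hss₂b⟩, stable_prod _ _,
    hnh₁₂, ?_⟩
  · rw [coeL, pair_smul_prod_set, smul_span_single, smul_span_single, one_mul]
    exact coeL₁
  · rw [coeL, pair_smul_prod_set, smul_span_single, smul_span_single, one_mul]
    exact coeL₂
  · -- classification
    rintro L' hL' ⟨hnot, M₁, M₂, ⟨c₁, hc₁, hM₁⟩, ⟨c₂, hc₂, hM₂⟩, hssa, hssb⟩ ⟨M, hHM, hMstab⟩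
    have hMlat := lattice_of_homothetic hHM hL'
    obtain ⟨u', v', hu', hv', hdecM⟩ := stable_decomp M hMlat hMstab
    obtain ⟨c, hc, hcM⟩ := hHM
    have coeM : (M : Set (F × F))
        = ((Submodule.span (OF F) {u'} : Submodule (OF F) F) : Set F)
          ×ˢ ((Submodule.span (OF F) {v'} : Submodule (OF F) F) : Set F) := by
      rw [hdecM]; rfl
    have hL's : (L' : Set (F × F)) = c⁻¹ • (M : Set (F × F)) := by
      rw [hcM, smul_smul_set, inv_mul_cancel₀ hc, one_smul_set]
    set e : F := c₂ * c⁻¹ with hedef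
    have he : e ≠ 0 := mul_ne_zero hc₂ (inv_ne_zero hc)
    have hM₂' : (M₂ : Set (F × F))
        = ((Submodule.span (OF F) {e * u'} : Submodule (OF F) F) : Set F)
          ×ˢ ((Submodule.span (OF F) {e * v'} : Submodule (OF F) F) : Set F) := by
      rw [hM₂, hL's, smul_smul_set, coeM, smul_prod_set, smul_span_single, smul_span_single]
    have hM₁' : (M₁ : Set (F × F))
        = ((Submodule.span (OF F) {c₁ * u} : Submodule (OF F) F) : Set F)
          ×ˢ ((Submodule.span (OF F) {c₁ * v} : Submodule (OF F) F) : Set F) := by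
      rw [hM₁, coeL, smul_prod_set, smul_span_single, smul_span_single]
    have hπM₁ : (π : F) • (M₁ : Set (F × F))
        = ((Submodule.span (OF F) {(π : F) * (c₁ * u)} : Submodule (OF F) F) : Set F)
          ×ˢ ((Submodule.span (OF F) {(π : F) * (c₁ * v)} : Submodule (OF F) F) : Set F) := by
      rw [hM₁', smul_prod_set, smul_span_single, smul_span_single]
    have h1s' : ((Submodule.span (OF F) {(π : F) * (c₁ * u)} : Submodule (OF F) F) : Set F)
          ×ˢ ((Submodule.span (OF F) {(π : F) * (c₁ * v)} : Submodule (OF F) F) : Set F)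
        ⊆ ((Submodule.span (OF F) {e * u'} : Submodule (OF F) F) : Set F)
          ×ˢ ((Submodule.span (OF F) {e * v'} : Submodule (OF F) F) : Set F) := by
      rw [← hπM₁, ← hM₂']; exact hssa.subset
    have h2s' : ((Submodule.span (OF F) {e * u'} : Submodule (OF F) F) : Set F)
          ×ˢ ((Submodule.span (OF F) {e * v'} : Submodule (OF F) F) : Set F)
        ⊆ ((Submodule.span (OF F) {c₁ * u} : Submodule (OF F) F) : Set F)
          ×ˢ ((Submodule.span (OF F) {c₁ * v} : Submodule (OF F) F) : Set F) := by
      rw [← hM₂', ← hM₁']; exact hssb.subset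
    have h1s := prod_coe_subset h1s'
    have h2s := prod_coe_subset h2s'
    have hd1 := span_dichotomy π hπ (mul_ne_zero hc₁ hu) h1s.1 h2s.1
    have hd2 := span_dichotomy π hπ (mul_ne_zero hc₁ hv) h1s.2 h2s.2
    rcases hd1 with hU | hU <;> rcases hd2 with hV | hV
    · -- both top : contradiction with hssb
      exact absurd (by rw [hM₂', hM₁', hU, hV]) hssb.ne
    · -- U top, V bottom : L₂
      refine Or.inr ⟨c₁⁻¹ * c₂, mul_ne_zero (inv_ne_zero hc₁) hc₂, ?_⟩
      rw [coeL₂, ← smul_smul_set, ← hM₂, hM₂', hU, hV, smul_prod_set, smul_span_single,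
        smul_span_single,
        show c₁⁻¹ * (c₁ * u) = u by field_simp,
        show c₁⁻¹ * ((π : F) * (c₁ * v)) = (π : F) * v by field_simp]
    · -- U bottom, V top : L₁
      refine Or.inl ⟨c₁⁻¹ * c₂, mul_ne_zero (inv_ne_zero hc₁) hc₂, ?_⟩
      rw [coeL₁, ← smul_smul_set, ← hM₂, hM₂', hU, hV, smul_prod_set, smul_span_single,
        smul_span_single,
        show c₁⁻¹ * ((π : F) * (c₁ * u)) = (π : F) * u by field_simp,
        show c₁⁻¹ * (c₁ * v) = v by field_simp]
    · -- both bottom : contradiction with hssa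
      exact absurd (by rw [hM₂', hπM₁, hU, hV]) (Ne.symm hssa.ne)
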